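/- Let P and Q be probability distributions on a finite set 𝒜 with the same support, let δ(P,Q) = (1/2) Σ_{x∈𝒜} |P(x) − Q(x)| be the total variation distance, and α_Q = min{Q(x) : Q(x) > 0}. Then δ(P,Q)² ≤ (1/2)·KL(P ‖ Q) ≤ (1/α_Q)·δ(P,Q)². -/

import Mathlib

open Finset

/-- φ(t) = (t+1) log t - 2(t-1) is monotone on (0,∞). -/
lemma phi_mono : MonotoneOn (fun t : ℝ => (t+1) * Real.log t - 2*(t-1)) (Set.Ioi 0) := by
  have hderiv : ∀ t : ℝ, 0 < t →
      HasDerivAt (fun t : ℝ => (t+1) * Real.log t - 2*(t-1))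
        (Real.log t + (t+1) * t⁻¹ - 2) t := by
    intro t ht
    have h1 : HasDerivAt (fun t : ℝ => (t+1) * Real.log t)
        (1 * Real.log t + (t+1) * t⁻¹) t :=
      (hasDerivAt_id t |>.add_const 1).mul (Real.hasDerivAt_log ht.ne')
    have h2 : HasDerivAt (fun t : ℝ => 2*(t-1)) 2 t := by
      simpa using ((hasDerivAt_id t).sub_const 1).const_mul 2
    have h3 := h1.sub h2
    rw [one_mul] at h3
    exact h3
  apply monotoneOn_of_deriv_nonneg (convex_Ioi 0)
  · intro t ht
    exact ((hderiv t ht).continuousAt).continuousWithinAt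
  · intro t ht
    rw [interior_Ioi] at ht
    exact (hderiv t ht).differentiableAt.differentiableWithinAt
  · intro t ht
    rw [interior_Ioi] at ht
    rw [(hderiv t ht).deriv]
    have := Real.one_sub_inv_le_log_of_pos ht
    have ht' : (t+1) * t⁻¹ = 1 + t⁻¹ := by
      rw [add_mul, mul_inv_cancel₀ (ne_of_gt (show (0:ℝ) < t from ht)), one_mul]
    rw [ht']
    linarith [this]

lemma phi_sign {t : ℝ} (ht : 0 < t) :
    (1 ≤ t → 0 ≤ (t+1) * Real.log t - 2*(t-1)) ∧
    (t ≤ 1 → (t+1) * Real.log t - 2*(t-1) ≤ 0) := by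
  have h1 : ((1:ℝ)+1) * Real.log 1 - 2*(1-1) = 0 := by simp
  constructor
  · intro h
    have := phi_mono (by norm_num : (1:ℝ) ∈ Set.Ioi 0) (by exact ht) h
    simp only [Real.log_one] at this
    linarith [this]
  · intro h
    have := phi_mono (by exact ht) (by norm_num : (1:ℝ) ∈ Set.Ioi 0) h
    simp only [Real.log_one] at this
    linarith [this]

/-- Key one-variable inequality: `3(t-1)² ≤ 2(t+2)(t log t - t + 1)` for `t ≥ 0`. -/
lemma key_ineq {t : ℝ} (ht : 0 ≤ t) :
    3*(t-1)^2 ≤ 2*(t+2)*(t * Real.log t - t + 1) := by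
  set h : ℝ → ℝ := fun t => 2*(t+2)*(t * Real.log t - t + 1) - 3*(t-1)^2 with hh
  have hderiv : ∀ t : ℝ, 0 < t →
      HasDerivAt h (4*((t+1) * Real.log t - 2*(t-1))) t := by
    intro t ht
    have h1 : HasDerivAt (fun t : ℝ => t * Real.log t - t + 1)
        (Real.log t) t := by
      have := (Real.hasDerivAt_mul_log ht.ne').sub (hasDerivAt_id t)
      simpa using this.add_const 1
    have h2 : HasDerivAt (fun t : ℝ => 2*(t+2)) 2 t := by
      simpa using ((hasDerivAt_id t).add_const 2).const_mul 2
    have h3 : HasDerivAt (fun t : ℝ => 3*(t-1)^2) (3*(2*(t-1))) t := by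
      simpa using (((hasDerivAt_id t).sub_const 1).pow 2).const_mul 3
    have := (h2.mul h1).sub h3
    rw [show 4*((t+1) * Real.log t - 2*(t-1)) = 2 * (t * Real.log t - t + 1) + 2 * (t + 2) * Real.log t - 3 * (2 * (t - 1)) by ring]
    exact this
  have hcont : Continuous h := by
    have : Continuous fun t : ℝ => t * Real.log t := Real.continuous_mul_log
    fun_prop
  have h1 : h 1 = 0 := by simp [hh]
  -- h ≥ 0 on [0, 1] via antitone
  have hanti : AntitoneOn h (Set.Icc 0 1) := by
    apply antitoneOn_of_deriv_nonpos (convex_Icc 0 1) hcont.continuousOn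
    · intro x hx
      rw [interior_Icc] at hx
      exact (hderiv x hx.1).differentiableAt.differentiableWithinAt
    · intro x hx
      rw [interior_Icc] at hx
      rw [(hderiv x hx.1).deriv]
      have := (phi_sign hx.1).2 hx.2.le
      linarith
  have hmono : MonotoneOn h (Set.Ici 1) := by
    apply monotoneOn_of_deriv_nonneg (convex_Ici 1) hcont.continuousOn
    · intro x hx
      rw [interior_Ici] at hx
      exact (hderiv x (by linarith [Set.mem_Ioi.mp hx] : (0:ℝ) < x)).differentiableAt.differentiableWithinAt
    · intro x hx
      rw [interior_Ici] at hx
      have hx1 : (1:ℝ) < x := hx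
      rw [(hderiv x (by linarith)).deriv]
      have := (phi_sign (by linarith : (0:ℝ) < x)).1 hx1.le
      linarith
  have hnonneg : 0 ≤ h t := by
    rcases le_or_gt t 1 with hc | hc
    · have := hanti (Set.mem_Icc.mpr ⟨ht, hc⟩) (Set.mem_Icc.mpr ⟨zero_le_one, le_refl 1⟩) hc
      linarith [h1 ▸ this]
    · have := hmono (Set.mem_Ici.mpr (le_refl 1)) (Set.mem_Ici.mpr hc.le) hc.le
      linarith [h1 ▸ this]
  simp only [hh] at hnonneg
  linarith

/-- Pointwise lower bound: `3(a-b)²/(2(a+2b)) ≤ a log(a/b) - a + b` for `a ≥ 0`, `b > 0`. -/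
lemma pointwise_lower {a b : ℝ} (ha : 0 ≤ a) (hb : 0 < b) :
    3*(a-b)^2 / (2*(a+2*b)) ≤ a * Real.log (a/b) - a + b := by
  have hs : 0 < 2*(a+2*b) := by linarith
  rw [div_le_iff₀ hs]
  have hkey := key_ineq (t := a/b) (div_nonneg ha hb.le)
  have hab : a = b * (a/b) := by field_simp
  set t := a/b with htdef
  calc 3*(a-b)^2 = b^2 * (3*(t-1)^2) := by rw [hab]; ring
    _ ≤ b^2 * (2*(t+2)*(t * Real.log t - t + 1)) := by
        apply mul_le_mul_of_nonneg_left hkey (sq_nonneg b)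
    _ = (a * Real.log t - a + b) * (2*(a+2*b)) := by rw [hab]; ring

/-- Pinsker and reverse Pinsker on a finite space: for probability mass functions `P, Q`
on a finite type with the same support, with `δ = (1/2)Σ|P x − Q x|` and
`α_Q = min{Q x : Q x > 0}`, we have `δ² ≤ (1/2)·KL(P‖Q) ≤ (1/α_Q)·δ²`. -/
theorem stmt8 {𝒜 : Type*} [Fintype 𝒜] (P Q : 𝒜 → ℝ)
    (hP0 : ∀ x, 0 ≤ P x) (hQ0 : ∀ x, 0 ≤ Q x)
    (hP1 : ∑ x, P x = 1) (hQ1 : ∑ x, Q x = 1)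
    (hsupp : ∀ x, P x = 0 ↔ Q x = 0)
    (αQ : ℝ) (hαle : ∀ x, 0 < Q x → αQ ≤ Q x) (hαmem : ∃ x, 0 < Q x ∧ Q x = αQ) :
    ((1 / 2) * ∑ x, |P x - Q x|) ^ 2 ≤ (1 / 2) * ∑ x, P x * Real.log (P x / Q x) ∧
      (1 / 2) * ∑ x, P x * Real.log (P x / Q x)
        ≤ (1 / αQ) * ((1 / 2) * ∑ x, |P x - Q x|) ^ 2 := by
  classical
  set S := ∑ x, |P x - Q x| with hS
  set KL := ∑ x, P x * Real.log (P x / Q x) with hKL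
  have hSd : ∑ x, (P x - Q x) = 0 := by
    rw [Finset.sum_sub_distrib, hP1, hQ1]; ring
  have hQzero : ∀ x, ¬ (0 < Q x) → P x = 0 ∧ Q x = 0 := by
    intro x hx
    have hq : Q x = 0 := le_antisymm (not_lt.mp hx) (hQ0 x)
    exact ⟨(hsupp x).mpr hq, hq⟩
  -- Pinsker (lower bound)
  have hPinsker : S^2 / 2 ≤ KL := by
    set T : Finset 𝒜 := Finset.univ.filter (fun x => 0 < Q x) with hT
    have hTs : ∑ x ∈ T, (P x + 2 * Q x) = 3 := by
      rw [show (3:ℝ) = ∑ x, (P x + 2 * Q x) by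
        rw [Finset.sum_add_distrib, ← Finset.mul_sum, hP1, hQ1]; ring]
      apply Finset.sum_subset (Finset.subset_univ T)
      intro x _ hx
      obtain ⟨hp, hq⟩ := hQzero x (by simpa [hT] using hx)
      simp [hp, hq]
    have hTS : ∑ x ∈ T, |P x - Q x| = S := by
      rw [hS]
      apply Finset.sum_subset (Finset.subset_univ T)
      intro x _ hx
      obtain ⟨hp, hq⟩ := hQzero x (by simpa [hT] using hx)
      simp [hp, hq]
    have hKLT : KL = ∑ x ∈ T, (P x * Real.log (P x / Q x) - P x + Q x) := by
      rw [hKL, show (∑ x, P x * Real.log (P x / Q x))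
          = ∑ x, (P x * Real.log (P x / Q x) - P x + Q x) by
        rw [Finset.sum_add_distrib, Finset.sum_sub_distrib, hP1, hQ1]; ring]
      symm
      apply Finset.sum_subset (Finset.subset_univ T)
      intro x _ hx
      obtain ⟨hp, hq⟩ := hQzero x (by simpa [hT] using hx)
      simp [hp, hq]
    have hCS : S^2 / 3 ≤ ∑ x ∈ T, |P x - Q x|^2 / (P x + 2 * Q x) := by
      rw [← hTS, ← hTs]
      apply Finset.sq_sum_div_le_sum_sq_div
      intro x hx
      have hq : 0 < Q x := by simpa [hT] using hx
      linarith [hP0 x]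
    have hterm : ∀ x ∈ T, 3 * (P x - Q x)^2 / (2 * (P x + 2 * Q x))
        ≤ P x * Real.log (P x / Q x) - P x + Q x := by
      intro x hx
      have hq : 0 < Q x := by simpa [hT] using hx
      exact pointwise_lower (hP0 x) hq
    have hsum : ∑ x ∈ T, 3 * (P x - Q x)^2 / (2 * (P x + 2 * Q x))
        = (3/2) * ∑ x ∈ T, |P x - Q x|^2 / (P x + 2 * Q x) := by
      rw [Finset.mul_sum]
      apply Finset.sum_congr rfl
      intro x hx
      have hq : 0 < Q x := by simpa [hT] using hx
      have hb : P x + 2 * Q x ≠ 0 := by linarith [hP0 x]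
      rw [sq_abs]
      field_simp
    have h1 : (3/2) * (S^2/3) ≤ (3/2) * ∑ x ∈ T, |P x - Q x|^2 / (P x + 2 * Q x) := by
      apply mul_le_mul_of_nonneg_left hCS (by norm_num)
    calc S^2/2 = (3/2) * (S^2/3) := by ring
      _ ≤ (3/2) * ∑ x ∈ T, |P x - Q x|^2 / (P x + 2 * Q x) := h1
      _ = ∑ x ∈ T, 3 * (P x - Q x)^2 / (2 * (P x + 2 * Q x)) := hsum.symm
      _ ≤ ∑ x ∈ T, (P x * Real.log (P x / Q x) - P x + Q x) := Finset.sum_le_sum hterm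
      _ = KL := hKLT.symm
  -- Reverse Pinsker (upper bound)
  obtain ⟨x₀, hx₀, hx₀'⟩ := hαmem
  have hα : 0 < αQ := hx₀' ▸ hx₀
  have hrev : KL ≤ (1/αQ) * (S^2 / 2) := by
    have hpt : ∀ x, P x * Real.log (P x / Q x) ≤ (P x - Q x)^2 / Q x + P x - Q x := by
      intro x
      rcases eq_or_lt_of_le (hP0 x) with hp | hp
      · have hq : Q x = 0 := (hsupp x).mp hp.symm
        simp [← hp, hq]
      · have hq : 0 < Q x := by
          rcases (hQ0 x).lt_or_eq with h | h
          · exact h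
          · exact absurd ((hsupp x).mpr h.symm) (ne_of_gt hp)
        have hlog : Real.log (P x / Q x) ≤ P x / Q x - 1 :=
          Real.log_le_sub_one_of_pos (div_pos hp hq)
        have h1 : P x * Real.log (P x / Q x) ≤ P x * (P x / Q x - 1) :=
          mul_le_mul_of_nonneg_left hlog (hP0 x)
        have h2 : P x * (P x / Q x - 1) = (P x - Q x)^2 / Q x + P x - Q x := by
          field_simp
          ring
        linarith [h2 ▸ h1]
    have hpt2 : ∀ x, (P x - Q x)^2 / Q x ≤ (1/αQ) * (P x - Q x)^2 := by
      intro x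
      rcases lt_or_ge 0 (Q x) with hq | hq
      · rw [one_div, inv_mul_eq_div]
        exact div_le_div_of_nonneg_left (sq_nonneg _) hα (hαle x hq)
      · obtain ⟨hp, hq'⟩ := hQzero x (not_lt.mpr hq)
        simp [hp, hq']
    -- sum of squares bound
    have hsq : ∑ x, (P x - Q x)^2 ≤ S^2 / 2 := by
      set A : Finset 𝒜 := Finset.univ.filter (fun x => 0 ≤ P x - Q x) with hA
      have hsplitS : ∑ x ∈ A, (P x - Q x) + ∑ x ∈ Aᶜ, -(P x - Q x) = S := by
        rw [hS, ← Finset.sum_filter_add_sum_filter_not Finset.univ (fun x => 0 ≤ P x - Q x)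
          (fun x => |P x - Q x|)]
        congr 1
        · apply Finset.sum_congr rfl
          intro x hx
          rw [abs_of_nonneg (by simpa [hA] using (Finset.mem_filter.mp hx).2)]
        · rw [show Aᶜ = Finset.univ.filter (fun x => ¬ 0 ≤ P x - Q x) by
            rw [hA, Finset.compl_filter]]
          apply Finset.sum_congr rfl
          intro x hx
          have := (Finset.mem_filter.mp hx).2
          rw [abs_of_neg (not_le.mp this)]
      have hsplit0 : ∑ x ∈ A, (P x - Q x) + ∑ x ∈ Aᶜ, (P x - Q x) = 0 := by
        rw [hA, Finset.compl_filter,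
          Finset.sum_filter_add_sum_filter_not Finset.univ _ (fun x => P x - Q x), hSd]
      have hAS : ∑ x ∈ A, (P x - Q x) = S / 2 := by
        rw [Finset.sum_neg_distrib] at hsplitS
        linarith
      have hAcS : ∑ x ∈ Aᶜ, -(P x - Q x) = S / 2 := by
        rw [Finset.sum_neg_distrib]
        linarith
      have h1 : ∑ x ∈ A, (P x - Q x)^2 ≤ (S/2)^2 := by
        rw [← hAS]
        apply Finset.sum_sq_le_sq_sum_of_nonneg
        intro x hx
        simpa [hA] using (Finset.mem_filter.mp hx).2
      have h2 : ∑ x ∈ Aᶜ, (P x - Q x)^2 ≤ (S/2)^2 := by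
        rw [← hAcS, show ∑ x ∈ Aᶜ, (P x - Q x)^2 = ∑ x ∈ Aᶜ, (-(P x - Q x))^2 by
          apply Finset.sum_congr rfl; intro x _; ring]
        apply Finset.sum_sq_le_sq_sum_of_nonneg
        intro x hx
        rw [hA, Finset.compl_filter] at hx
        have := (Finset.mem_filter.mp hx).2
        linarith [not_le.mp this]
      have := Finset.sum_filter_add_sum_filter_not Finset.univ (fun x => 0 ≤ P x - Q x)
        (fun x => (P x - Q x)^2)
      rw [← Finset.compl_filter, ← hA] at this
      nlinarith [this, h1, h2]
    calc KL ≤ ∑ x, ((P x - Q x)^2 / Q x + P x - Q x) := Finset.sum_le_sum (fun x _ => hpt x)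
      _ = ∑ x, (P x - Q x)^2 / Q x := by
          rw [show (∑ x, ((P x - Q x)^2 / Q x + P x - Q x))
              = (∑ x, (P x - Q x)^2 / Q x) + ∑ x, (P x - Q x) by
            rw [← Finset.sum_add_distrib]
            apply Finset.sum_congr rfl
            intro x _; ring]
          rw [hSd]; ring
      _ ≤ ∑ x, (1/αQ) * (P x - Q x)^2 := Finset.sum_le_sum (fun x _ => hpt2 x)
      _ = (1/αQ) * ∑ x, (P x - Q x)^2 := by rw [Finset.mul_sum]
      _ ≤ (1/αQ) * (S^2/2) := by
          apply mul_le_mul_of_nonneg_left hsq (by positivity)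
  constructor
  · nlinarith [hPinsker]
  · nlinarith [hrev, hα, sq_nonneg S]
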